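/- For natural numbers k and r, the number of functions i : [2r] → [k] such that every value in the image of i is attained at least twice is at most (2r)! · η^{−2r} · exp(C η² k) for every η ∈ (0,1], for some absolute constant C; in particular, taking η² k = r (when r ≤ k), this count is at most exp(C' r) · r^r · k^r. -/

import Mathlib

open scoped BigOperators Classical

/-- `R_{k,r}`: functions `i : [2r] → [k]` such that every value in the image is
attained at least twice. -/
def IsRepeating {r k : ℕ} (i : Fin (2 * r) → Fin k) : Prop :=
  ∀ j ∈ Set.range i, 2 ≤ (Finset.univ.filter fun s : Fin (2 * r) => i s = j).card

open Finset in
private lemma count_le (k r m : ℕ) (hrm : min r k ≤ m) (hmk : m ≤ k) :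
    (Finset.univ.filter fun i : Fin (2 * r) → Fin k => IsRepeating i).card
      ≤ k.choose m * m ^ (2 * r) := by
  classical
  have hsub : (univ.filter fun i : Fin (2 * r) → Fin k => IsRepeating i)
      ⊆ (powersetCard m (univ : Finset (Fin k))).biUnion
          (fun T => univ.filter fun i : Fin (2 * r) → Fin k => ∀ s, i s ∈ T) := by
    intro i hi
    rw [mem_filter] at hi
    have hrep := hi.2
    have himg : (univ.image i).card ≤ min r k := by
      refine le_min ?_ ?_
      · have hfib : (univ : Finset (Fin (2 * r))).card
            = ∑ j ∈ univ.image i, (univ.filter fun s => i s = j).card :=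
          card_eq_sum_card_fiberwise (fun x _ => mem_image_of_mem i (mem_univ x))
        have h2 : 2 * (univ.image i).card
            ≤ ∑ j ∈ univ.image i, (univ.filter fun s => i s = j).card := by
          have := sum_le_sum (s := univ.image i) (f := fun _ => 2)
            (g := fun j => (univ.filter fun s : Fin (2 * r) => i s = j).card)
            (fun j hj => by
              obtain ⟨s, _, hs⟩ := mem_image.1 hj
              exact hrep j ⟨s, hs⟩)
          simpa [mul_comm] using this
        have hcu : (univ : Finset (Fin (2 * r))).card = 2 * r := by simp
        omega
      · simpa using card_le_univ (univ.image i)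
    obtain ⟨T, hT1, _, hT3⟩ :=
      exists_subsuperset_card_eq (subset_univ (univ.image i)) (himg.trans hrm)
        (by simpa using hmk)
    refine mem_biUnion.2 ⟨T, mem_powersetCard.2 ⟨subset_univ _, hT3⟩, ?_⟩
    exact mem_filter.2 ⟨mem_univ _, fun s => hT1 (mem_image_of_mem i (mem_univ s))⟩
  calc (univ.filter fun i : Fin (2 * r) → Fin k => IsRepeating i).card
      ≤ ((powersetCard m (univ : Finset (Fin k))).biUnion
          (fun T => univ.filter fun i : Fin (2 * r) → Fin k => ∀ s, i s ∈ T)).card :=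
        card_le_card hsub
    _ ≤ ∑ T ∈ powersetCard m (univ : Finset (Fin k)),
          (univ.filter fun i : Fin (2 * r) → Fin k => ∀ s, i s ∈ T).card :=
        card_biUnion_le
    _ = ∑ _T ∈ powersetCard m (univ : Finset (Fin k)), m ^ (2 * r) := by
        refine sum_congr rfl fun T hT => ?_
        have hTcard : T.card = m := (mem_powersetCard.1 hT).2
        have hset : (univ.filter fun i : Fin (2 * r) → Fin k => ∀ s, i s ∈ T)
            = Fintype.piFinset (fun _ : Fin (2 * r) => T) := by
          ext g; simp [Fintype.mem_piFinset]
        rw [hset, Fintype.card_piFinset_const, hTcard]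
    _ = k.choose m * m ^ (2 * r) := by
        rw [sum_const, card_powersetCard, smul_eq_mul]
        simp

private lemma tail_ineq (r : ℕ) :
    (4 : ℝ) ^ r * (r : ℝ) ^ (2 * r) ≤ (Real.exp 1) ^ (3 * r) * ((2 * r).factorial : ℝ) := by
  have hfac : (0 : ℝ) < ((2 * r).factorial : ℝ) := by exact_mod_cast (2 * r).factorial_pos
  have h := Real.pow_div_factorial_le_exp (x := ((2 * r : ℕ) : ℝ)) (by positivity) (2 * r)
  rw [div_le_iff₀ hfac] at h
  have hexp : Real.exp ((2 * r : ℕ) : ℝ) = (Real.exp 1) ^ (2 * r) := by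
    rw [← Real.exp_nat_mul, mul_one]
  have hE1 : (1 : ℝ) ≤ Real.exp 1 := Real.one_le_exp zero_le_one
  calc (4 : ℝ) ^ r * (r : ℝ) ^ (2 * r) = ((2 * r : ℕ) : ℝ) ^ (2 * r) := by
        rw [pow_mul, pow_mul, ← mul_pow]
        push_cast
        ring_nf
    _ ≤ Real.exp ((2 * r : ℕ) : ℝ) * ((2 * r).factorial : ℝ) := h
    _ = (Real.exp 1) ^ (2 * r) * ((2 * r).factorial : ℝ) := by rw [hexp]
    _ ≤ (Real.exp 1) ^ (3 * r) * ((2 * r).factorial : ℝ) := by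
        gcongr
        · omega

theorem card_repeating_le :
    ∃ C : ℝ, 0 < C ∧ ∃ C' : ℝ, 0 < C' ∧ ∀ k r : ℕ,
      (∀ η : ℝ, 0 < η → η ≤ 1 →
        ((Finset.univ.filter fun i : Fin (2 * r) → Fin k =>
            IsRepeating i).card : ℝ) ≤
          ((2 * r).factorial : ℝ) * η ^ (-(2 * r : ℤ)) * Real.exp (C * η ^ 2 * k)) ∧
      (r ≤ k →
        ((Finset.univ.filter fun i : Fin (2 * r) → Fin k =>
            IsRepeating i).card : ℝ) ≤ Real.exp (C' * r) * r ^ r * k ^ r) := by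
  classical
  set E : ℝ := Real.exp 1 with hEdef
  have hE1 : (1 : ℝ) ≤ E := Real.one_le_exp zero_le_one
  have hE0 : (0 : ℝ) < E := lt_of_lt_of_le one_pos hE1
  refine ⟨E ^ 3 / 4, by positivity, 1, one_pos, fun k r => ⟨fun η hη hη1 => ?_, fun hrk => ?_⟩⟩
  · -- first bound
    set C : ℝ := E ^ 3 / 4 with hCdef
    set y : ℝ := C * η ^ 2 * k with hydef
    have hy0 : 0 ≤ y := by positivity
    have hfacr : (0 : ℝ) < (r.factorial : ℝ) := by exact_mod_cast r.factorial_pos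
    have hyr : y ^ r ≤ Real.exp y * (r.factorial : ℝ) := by
      have h := Real.pow_div_factorial_le_exp (x := y) hy0 r
      rwa [div_le_iff₀ hfacr] at h
    have hkη : (k : ℝ) * η ^ 2 = 4 / E ^ 3 * y := by
      rw [hydef, hCdef]; field_simp
    -- key : N * η^(2r) ≤ (2r)! * exp y
    have key : ((Finset.univ.filter fun i : Fin (2 * r) → Fin k =>
        IsRepeating i).card : ℝ) * η ^ (2 * r)
          ≤ ((2 * r).factorial : ℝ) * Real.exp y := by
      rcases le_or_gt r k with hrk | hkr
      · -- case r ≤ k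
        have hcount : ((Finset.univ.filter fun i : Fin (2 * r) → Fin k =>
            IsRepeating i).card : ℝ) ≤ (k.choose r : ℝ) * (r : ℝ) ^ (2 * r) := by
          exact_mod_cast count_le k r r (by simp) hrk
        have hchoose : (k.choose r : ℝ) ≤ (k : ℝ) ^ r / (r.factorial : ℝ) :=
          Nat.choose_le_pow_div r k
        have core : (k : ℝ) ^ r * (r : ℝ) ^ (2 * r) * η ^ (2 * r)
            ≤ ((2 * r).factorial : ℝ) * Real.exp y * (r.factorial : ℝ) := by
          calc (k : ℝ) ^ r * (r : ℝ) ^ (2 * r) * η ^ (2 * r)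
              = ((k : ℝ) * η ^ 2) ^ r * (r : ℝ) ^ (2 * r) := by
                rw [mul_pow, pow_mul η 2 r]; ring
            _ = (4 / E ^ 3) ^ r * y ^ r * (r : ℝ) ^ (2 * r) := by rw [hkη, mul_pow]
            _ ≤ (4 / E ^ 3) ^ r * (Real.exp y * (r.factorial : ℝ)) * (r : ℝ) ^ (2 * r) := by
                gcongr
            _ = (4 ^ r * (r : ℝ) ^ (2 * r) / E ^ (3 * r)) * (Real.exp y * (r.factorial : ℝ)) := by
                rw [div_pow, ← pow_mul]; ring
            _ ≤ ((2 * r).factorial : ℝ) * (Real.exp y * (r.factorial : ℝ)) := by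
                have htail := tail_ineq r
                rw [← hEdef] at htail
                have hdiv : 4 ^ r * (r : ℝ) ^ (2 * r) / E ^ (3 * r) ≤ ((2 * r).factorial : ℝ) := by
                  rw [div_le_iff₀ (by positivity)]
                  linarith [htail]
                exact mul_le_mul_of_nonneg_right hdiv (by positivity)
            _ = ((2 * r).factorial : ℝ) * Real.exp y * (r.factorial : ℝ) := by
                ring
        calc ((Finset.univ.filter fun i : Fin (2 * r) → Fin k =>
            IsRepeating i).card : ℝ) * η ^ (2 * r)
            ≤ ((k : ℝ) ^ r / (r.factorial : ℝ)) * (r : ℝ) ^ (2 * r) * η ^ (2 * r) := by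
              have h1 : ((Finset.univ.filter fun i : Fin (2 * r) → Fin k =>
                  IsRepeating i).card : ℝ) ≤ ((k : ℝ) ^ r / (r.factorial : ℝ)) * (r : ℝ) ^ (2 * r) :=
                hcount.trans (by gcongr)
              gcongr
          _ = (k : ℝ) ^ r * (r : ℝ) ^ (2 * r) * η ^ (2 * r) / (r.factorial : ℝ) := by ring
          _ ≤ ((2 * r).factorial : ℝ) * Real.exp y * (r.factorial : ℝ) / (r.factorial : ℝ) := by
              gcongr
          _ = ((2 * r).factorial : ℝ) * Real.exp y := by field_simp
      · -- case k < r
        have hcount : ((Finset.univ.filter fun i : Fin (2 * r) → Fin k =>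
            IsRepeating i).card : ℝ) ≤ (k : ℝ) ^ (2 * r) := by
          have h1 : (Finset.univ.filter fun i : Fin (2 * r) → Fin k =>
              IsRepeating i).card ≤ k ^ (2 * r) := by
            calc (Finset.univ.filter fun i : Fin (2 * r) → Fin k => IsRepeating i).card
                ≤ (Finset.univ : Finset (Fin (2 * r) → Fin k)).card := Finset.card_filter_le _ _
              _ = k ^ (2 * r) := by simp [Finset.card_univ]
          exact_mod_cast h1
        have hrfac : (r.factorial : ℝ) ≤ (r : ℝ) ^ r := by exact_mod_cast r.factorial_le_pow
        calc ((Finset.univ.filter fun i : Fin (2 * r) → Fin k =>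
            IsRepeating i).card : ℝ) * η ^ (2 * r)
            ≤ (k : ℝ) ^ (2 * r) * η ^ (2 * r) := by
              gcongr
          _ = ((k : ℝ) * (k : ℝ) * η ^ 2) ^ r := by
              rw [mul_pow, mul_pow, pow_mul η 2 r, pow_mul (k : ℝ) 2 r]
              ring_nf
          _ ≤ ((r : ℝ) * ((k : ℝ) * η ^ 2)) ^ r := by
              have hk : (k : ℝ) ≤ (r : ℝ) := by exact_mod_cast hkr.le
              have h' : (k : ℝ) * (k : ℝ) * η ^ 2 ≤ (r : ℝ) * ((k : ℝ) * η ^ 2) := by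
                have h2 := mul_le_mul_of_nonneg_right hk
                  (show (0 : ℝ) ≤ (k : ℝ) * η ^ 2 by positivity)
                nlinarith [h2]
              exact pow_le_pow_left₀ (by positivity) h' r
          _ = (4 / E ^ 3) ^ r * y ^ r * (r : ℝ) ^ r := by
              rw [hkη, mul_pow, mul_pow]; ring
          _ ≤ (4 / E ^ 3) ^ r * (Real.exp y * (r.factorial : ℝ)) * (r : ℝ) ^ r := by
              gcongr
          _ ≤ (4 / E ^ 3) ^ r * (Real.exp y * (r : ℝ) ^ r) * (r : ℝ) ^ r := by
              gcongr
          _ = (4 ^ r * (r : ℝ) ^ (2 * r) / E ^ (3 * r)) * Real.exp y := by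
              rw [div_pow, ← pow_mul, two_mul, pow_add]; ring
          _ ≤ ((2 * r).factorial : ℝ) * Real.exp y := by
              have htail := tail_ineq r
              rw [← hEdef] at htail
              have hdiv : 4 ^ r * (r : ℝ) ^ (2 * r) / E ^ (3 * r) ≤ ((2 * r).factorial : ℝ) := by
                rw [div_le_iff₀ (by positivity)]
                linarith [htail]
              exact mul_le_mul_of_nonneg_right hdiv (le_of_lt (Real.exp_pos y))
    -- conclude
    have hz : η ^ (-(2 * r : ℤ)) = (η ^ (2 * r))⁻¹ := by
      rw [← zpow_natCast η (2 * r), ← zpow_neg]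
      norm_num
    have hp : (0 : ℝ) < η ^ (2 * r) := by positivity
    calc ((Finset.univ.filter fun i : Fin (2 * r) → Fin k => IsRepeating i).card : ℝ)
        = ((Finset.univ.filter fun i : Fin (2 * r) → Fin k => IsRepeating i).card : ℝ)
            * η ^ (2 * r) * (η ^ (2 * r))⁻¹ := by field_simp
      _ ≤ ((2 * r).factorial : ℝ) * Real.exp y * (η ^ (2 * r))⁻¹ := by gcongr
      _ = ((2 * r).factorial : ℝ) * η ^ (-(2 * r : ℤ)) * Real.exp (C * η ^ 2 * k) := by
          rw [hz, ← hydef]; ring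
  · -- second bound, r ≤ k
    have hcount : ((Finset.univ.filter fun i : Fin (2 * r) → Fin k =>
        IsRepeating i).card : ℝ) ≤ (k.choose r : ℝ) * (r : ℝ) ^ (2 * r) := by
      exact_mod_cast count_le k r r (by simp) hrk
    have hchoose : (k.choose r : ℝ) ≤ (k : ℝ) ^ r / (r.factorial : ℝ) :=
      Nat.choose_le_pow_div r k
    have hfacr : (0 : ℝ) < (r.factorial : ℝ) := by exact_mod_cast r.factorial_pos
    have hrr : (r : ℝ) ^ r ≤ Real.exp r * (r.factorial : ℝ) := by
      have h := Real.pow_div_factorial_le_exp (x := (r : ℝ)) (by positivity) r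
      rwa [div_le_iff₀ hfacr] at h
    calc ((Finset.univ.filter fun i : Fin (2 * r) → Fin k => IsRepeating i).card : ℝ)
        ≤ (k.choose r : ℝ) * (r : ℝ) ^ (2 * r) := hcount
      _ ≤ ((k : ℝ) ^ r / (r.factorial : ℝ)) * (r : ℝ) ^ (2 * r) := by gcongr
      _ = (k : ℝ) ^ r * ((r : ℝ) ^ r / (r.factorial : ℝ)) * (r : ℝ) ^ r := by
          rw [two_mul, pow_add]; ring
      _ ≤ (k : ℝ) ^ r * Real.exp r * (r : ℝ) ^ r := by
          gcongr
          rw [div_le_iff₀ hfacr]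
          exact hrr
      _ = Real.exp ((1 : ℝ) * r) * (r : ℝ) ^ r * (k : ℝ) ^ r := by rw [one_mul]; ring
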